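/- Let G be an undirected graph whose vertex set is the disjoint union of independent sets A, B, C with |A| = |B| = |C| = q, and construct the associated scheduling instance. If the associated scheduling instance admits a feasible schedule of makespan at most 12(q+1), then the vertices of G can be partitioned into q sets of size three, each inducing a triangle of G. -/

import Mathlib

/-!  Coupled-task scheduling with compatibility constraints. -/

/-- A coupled-task `(a, L, b)`: a first sub-task of processing time `a`,
an idle period of length `L`, then a second sub-task of processing time `b`. -/
structure CTask where
  a : ℝ
  L : ℝ
  b : ℝ

namespace CTask

/-- The set of time instants occupied by the task when started at time `s`. -/
def occupied (t : CTask) (s : ℝ) : Set ℝ :=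
  Set.Ico s (s + t.a) ∪ Set.Ico (s + t.a + t.L) (s + t.a + t.L + t.b)

/-- The idle window of the task when started at time `s`. -/
def idleWindow (t : CTask) (s : ℝ) : Set ℝ :=
  Set.Ico (s + t.a) (s + t.a + t.L)

/-- The span of the task when started at time `s`. -/
def span (t : CTask) (s : ℝ) : Set ℝ :=
  Set.Ico s (s + t.a + t.L + t.b)

/-- Total duration `a + L + b` of a coupled-task. -/
def dur (t : CTask) : ℝ := t.a + t.L + t.b

/-- All three components of the task are positive. -/
def Positive (t : CTask) : Prop := 0 < t.a ∧ 0 < t.L ∧ 0 < t.b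

end CTask

/-- The stretched coupled-task with stretch factor `α`, i.e. `(α, α, α)`. -/
def stretched (α : ℝ) : CTask := ⟨α, α, α⟩

/-- A scheduling instance: a coupled-task for each index, together with a
compatibility relation.  `compat t' t` means that the compatibility graph
contains the arc `(t', t)` (so `t'` may be executed during the idle window of
`t`); an undirected edge `{t, t'}` is modelled by `compat t' t ∧ compat t t'`. -/
structure SchedInstance (ι : Type*) where
  task : ι → CTask
  compat : ι → ι → Prop

namespace SchedInstance

variable {ι : Type*}

/-- A schedule `σ` (assigning a start time to every task) is feasible if all
start times are nonnegative, occupied intervals of distinct tasks are pairwise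
disjoint, and whenever an occupied interval of `t'` meets the idle window of
`t`, the compatibility graph contains the arc (or edge) from `t'` to `t`. -/
def Feasible (I : SchedInstance ι) (σ : ι → ℝ) : Prop :=
  (∀ t, 0 ≤ σ t) ∧
  (∀ t t', t ≠ t' →
    Disjoint ((I.task t).occupied (σ t)) ((I.task t').occupied (σ t'))) ∧
  (∀ t t', t ≠ t' →
    (((I.task t').occupied (σ t')) ∩ ((I.task t).idleWindow (σ t))).Nonempty →
      I.compat t' t)

/-- Completion time of task `t` under schedule `σ`. -/
def endTime (I : SchedInstance ι) (σ : ι → ℝ) (t : ι) : ℝ :=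
  σ t + (I.task t).dur

/-- The makespan of `σ` is at most `C`. -/
def MakespanLE (I : SchedInstance ι) (σ : ι → ℝ) (C : ℝ) : Prop :=
  ∀ t, I.endTime σ t ≤ C

/-- The makespan of `σ` is exactly `C`. -/
def MakespanEq (I : SchedInstance ι) (σ : ι → ℝ) (C : ℝ) : Prop :=
  I.MakespanLE σ C ∧ ∃ t, I.endTime σ t = C

end SchedInstance

/-- The three extra tasks `z₀, z₁, z₂` of the Partition-into-Triangles
reduction. -/
inductive Extra | z0 | z1 | z2

/-- The scheduling instance associated with a graph `G` whose vertex set is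
partitioned into independent sets `A`, `B`, `C`: each vertex of `A ∪ B` yields
a stretched task of factor `1`, each vertex of `C` a stretched task of factor
`4`; the extra tasks `z₀, z₁` have factor `1` and `z₂` has factor `4`.  Edges
of `G` inside `A ∪ B` are kept undirected, edges between `A ∪ B` and `C` are
oriented toward `C`; moreover there are the edge `{z₀, z₁}`, the arcs
`(z₀, z₂)` and `(z₁, z₂)`, an edge between `z₀` and every `A`-task and an edge
between `z₁` and every `B`-task. -/
def triInst {V : Type*} [DecidableEq V] (G : SimpleGraph V) (A B C : Finset V) :
    SchedInstance (V ⊕ Extra) where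
  task := fun i => match i with
    | .inl v => if v ∈ C then stretched 4 else stretched 1
    | .inr .z0 => stretched 1
    | .inr .z1 => stretched 1
    | .inr .z2 => stretched 4
  compat := fun i j => match i, j with
    | .inl u, .inl v => G.Adj u v ∧ u ∉ C
    | .inl u, .inr .z0 => u ∈ A
    | .inr .z0, .inl u => u ∈ A
    | .inl u, .inr .z1 => u ∈ B
    | .inr .z1, .inl u => u ∈ B
    | .inr .z0, .inr .z1 => True
    | .inr .z1, .inr .z0 => True
    | .inr .z0, .inr .z2 => True
    | .inr .z1, .inr .z2 => True
    | _, _ => False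

/-- The vertices of `G` can be partitioned into `q` disjoint sets of size
three, each inducing a triangle of `G`. -/
def HasTrianglePartition {V : Type*} [Fintype V] [DecidableEq V] (G : SimpleGraph V) (q : ℕ) : Prop :=
  ∃ Part : Finset (Finset V), Part.card = q ∧
    (∀ S ∈ Part, ∀ S' ∈ Part, S ≠ S' → Disjoint S S') ∧
    Part.biUnion id = Finset.univ ∧
    ∀ S ∈ Part, S.card = 3 ∧ ∀ u ∈ S, ∀ v ∈ S, u ≠ v → G.Adj u v

/-! ### Auxiliary material for the proof of `stmt8` -/

deriving instance DecidableEq for Extra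

instance : Fintype Extra :=
  ⟨{Extra.z0, Extra.z1, Extra.z2}, fun x => by cases x <;> simp⟩

open MeasureTheory

lemma stretched_mem_occupied {α s x : ℝ} :
    x ∈ (stretched α).occupied s ↔
      (s ≤ x ∧ x < s + α) ∨ (s + α + α ≤ x ∧ x < s + α + α + α) := by
  simp [CTask.occupied, stretched, Set.mem_Ico]

lemma stretched_mem_idleWindow {α s x : ℝ} :
    x ∈ (stretched α).idleWindow s ↔ s + α ≤ x ∧ x < s + α + α := by
  simp [CTask.idleWindow, stretched, Set.mem_Ico]

lemma stretched_dur (α : ℝ) : (stretched α).dur = α + α + α := rfl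

lemma stretched_vol (α s : ℝ) (hα : 0 ≤ α) :
    volume ((stretched α).occupied s) = ENNReal.ofReal (2 * α) := by
  show volume (Set.Ico s (s + α) ∪ Set.Ico (s + α + α) (s + α + α + α)) = _
  rw [measure_union ?_ measurableSet_Ico, Real.volume_Ico, Real.volume_Ico,
    ← ENNReal.ofReal_add (by linarith) (by linarith)]
  · ring_nf
  · rw [Set.disjoint_left]; intro x hx hx'
    simp only [Set.mem_Ico] at hx hx'; linarith

/-- if the scheduling instance associated with `G` (whose vertex
set is the disjoint union of independent sets `A`, `B`, `C` with
`|A| = |B| = |C| = q`) admits a feasible schedule of makespan at most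
`12(q + 1)`, then the vertices of `G` can be partitioned into `q` triangles. -/
theorem stmt8 {V : Type*} [Fintype V] [DecidableEq V] (G : SimpleGraph V)
    (A B C : Finset V) (q : ℕ)
    (hAB : Disjoint A B) (hAC : Disjoint A C) (hBC : Disjoint B C)
    (hcover : A ∪ B ∪ C = Finset.univ)
    (hcA : A.card = q) (hcB : B.card = q) (hcC : C.card = q)
    (hindA : ∀ u ∈ A, ∀ v ∈ A, ¬ G.Adj u v)
    (hindB : ∀ u ∈ B, ∀ v ∈ B, ¬ G.Adj u v)
    (hindC : ∀ u ∈ C, ∀ v ∈ C, ¬ G.Adj u v)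
    (σ : V ⊕ Extra → ℝ) (hσ : (triInst G A B C).Feasible σ)
    (hmk : (triInst G A B C).MakespanLE σ (12 * ((q : ℝ) + 1))) :
    HasTrianglePartition G q := by
  classical
  obtain ⟨hpos, hdisj, hcomp⟩ := hσ
  set M : ℝ := 12 * ((q : ℝ) + 1) with hMdef
  set I := triInst G A B C with hIdef
  -- every task is a stretched task of factor 1 or 4
  have htask : ∀ t : V ⊕ Extra, ∃ α : ℝ, (α = 1 ∨ α = 4) ∧ I.task t = stretched α := by
    intro t
    rcases t with v | e
    · by_cases hv : v ∈ C
      · exact ⟨4, Or.inr rfl, by simp [hIdef, triInst, hv]⟩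
      · exact ⟨1, Or.inl rfl, by simp [hIdef, triInst, hv]⟩
    · rcases e with _ | _ | _
      exacts [⟨1, Or.inl rfl, rfl⟩, ⟨1, Or.inl rfl, rfl⟩, ⟨4, Or.inr rfl, rfl⟩]
  -- occupied intervals lie inside [0, M)
  have hOsub : ∀ t, (I.task t).occupied (σ t) ⊆ Set.Ico 0 M := by
    intro t
    obtain ⟨α, hα14, hts⟩ := htask t
    have hα : (0 : ℝ) ≤ α := by rcases hα14 with h | h <;> rw [h] <;> norm_num
    have hend := hmk t
    rw [SchedInstance.endTime, hts, stretched_dur] at hend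
    have h0 := hpos t
    intro x hx
    rw [hts, stretched_mem_occupied] at hx
    constructor
    · rcases hx with ⟨h1, h2⟩ | ⟨h1, h2⟩ <;> linarith
    · rcases hx with ⟨h1, h2⟩ | ⟨h1, h2⟩ <;> linarith
  -- total volume of occupied time equals M
  have hvolU : volume (⋃ t, (I.task t).occupied (σ t)) = ENNReal.ofReal M := by
    have hmeas : ∀ t : V ⊕ Extra, MeasurableSet ((I.task t).occupied (σ t)) := by
      intro t
      exact measurableSet_Ico.union measurableSet_Ico
    rw [measure_iUnion (fun t t' htt' => hdisj t t' htt') hmeas, tsum_fintype,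
      Fintype.sum_sum_type]
    have hz : ∑ e : Extra, volume ((I.task (Sum.inr e)).occupied (σ (Sum.inr e)))
        = ENNReal.ofReal 12 := by
      have huniv : (Finset.univ : Finset Extra) = {Extra.z0, Extra.z1, Extra.z2} := by decide
      rw [huniv, Finset.sum_insert (by decide), Finset.sum_insert (by decide),
        Finset.sum_singleton,
        show I.task (Sum.inr Extra.z0) = stretched 1 from rfl,
        show I.task (Sum.inr Extra.z1) = stretched 1 from rfl,
        show I.task (Sum.inr Extra.z2) = stretched 4 from rfl,
        stretched_vol 1 _ (by norm_num), stretched_vol 1 _ (by norm_num),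
        stretched_vol 4 _ (by norm_num),
        ← ENNReal.ofReal_add (by norm_num) (by norm_num),
        ← ENNReal.ofReal_add (by norm_num) (by norm_num)]
      norm_num
    have hv : ∑ w : V, volume ((I.task (Sum.inl w)).occupied (σ (Sum.inl w)))
        = ENNReal.ofReal (12 * (q : ℝ)) := by
      have hterm : ∀ w : V, volume ((I.task (Sum.inl w)).occupied (σ (Sum.inl w)))
          = ENNReal.ofReal (if w ∈ C then (8 : ℝ) else 2) := by
        intro w
        by_cases hw : w ∈ C
        · rw [show I.task (Sum.inl w) = stretched 4 by simp [hIdef, triInst, hw],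
            stretched_vol 4 _ (by norm_num), if_pos hw]
          norm_num
        · rw [show I.task (Sum.inl w) = stretched 1 by simp [hIdef, triInst, hw],
            stretched_vol 1 _ (by norm_num), if_neg hw]
          norm_num
      rw [Finset.sum_congr rfl fun w _ => hterm w,
        ← ENNReal.ofReal_sum_of_nonneg (fun w _ => by split_ifs <;> norm_num)]
      congr 1
      rw [show (Finset.univ : Finset V) = A ∪ B ∪ C from hcover.symm,
        Finset.sum_union (Finset.disjoint_union_left.mpr ⟨hAC, hBC⟩),
        Finset.sum_union hAB]
      have hA : ∑ w ∈ A, (if w ∈ C then (8 : ℝ) else 2) = 2 * q := by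
        rw [Finset.sum_congr rfl fun w hw => if_neg (Finset.disjoint_left.mp hAC hw),
          Finset.sum_const, hcA, nsmul_eq_mul]
        ring
      have hB : ∑ w ∈ B, (if w ∈ C then (8 : ℝ) else 2) = 2 * q := by
        rw [Finset.sum_congr rfl fun w hw => if_neg (Finset.disjoint_left.mp hBC hw),
          Finset.sum_const, hcB, nsmul_eq_mul]
        ring
      have hC : ∑ w ∈ C, (if w ∈ C then (8 : ℝ) else 2) = 8 * q := by
        rw [Finset.sum_congr rfl fun w hw => if_pos hw, Finset.sum_const, hcC, nsmul_eq_mul]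
        ring
      rw [hA, hB, hC]
      ring
    rw [hv, hz, ← ENNReal.ofReal_add (by positivity) (by norm_num), hMdef]
    congr 1
    ring
  -- every instant in [0, M) is occupied by some task
  have hcov : ∀ x : ℝ, 0 ≤ x → x < M → ∃ t, x ∈ (I.task t).occupied (σ t) := by
    intro x hx0 hxM
    by_contra hcon
    push_neg at hcon
    set E : Finset ℝ := (Finset.univ.image fun t : V ⊕ Extra => σ t) ∪
      (Finset.univ.image fun t : V ⊕ Extra => σ t + (I.task t).a + (I.task t).L) with hEdef
    set T : Finset ℝ := insert M (E.filter fun a => x < a) with hTdef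
    have hTne : T.Nonempty := ⟨M, Finset.mem_insert_self _ _⟩
    set m := T.min' hTne with hmdef
    have hxm : x < m := by
      have hmem : m ∈ T := T.min'_mem hTne
      rw [hTdef, Finset.mem_insert] at hmem
      rcases hmem with h | h
      · rw [h]; exact hxM
      · exact (Finset.mem_filter.mp h).2
    have hmM : m ≤ M := Finset.min'_le T M (Finset.mem_insert_self _ _)
    have hdisjxm : ∀ t, Disjoint (Set.Ico x m) ((I.task t).occupied (σ t)) := by
      intro t
      rw [Set.disjoint_left]
      intro y hy hyO
      obtain ⟨hy1, hy2⟩ := hy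
      have hxO := hcon t
      have key : ∀ l r_ : ℝ, l ∈ E → l ≤ y → y < r_ → ¬(l ≤ x ∧ x < r_) → False := by
        intro l r_ hlE hly hyr hxnot
        by_cases hxl : x < l
        · have hlT : l ∈ T := by
            rw [hTdef]
            exact Finset.mem_insert_of_mem (Finset.mem_filter.mpr ⟨hlE, hxl⟩)
          have hml := Finset.min'_le T l hlT
          linarith
        · push_neg at hxl
          have hrx : ¬ x < r_ := fun hh => hxnot ⟨hxl, hh⟩
          push_neg at hrx
          linarith
      have hl1 : σ t ∈ E := by
        rw [hEdef]
        exact Finset.mem_union_left _ (Finset.mem_image_of_mem _ (Finset.mem_univ t))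
      have hl2 : σ t + (I.task t).a + (I.task t).L ∈ E := by
        rw [hEdef]
        exact Finset.mem_union_right _ (Finset.mem_image_of_mem _ (Finset.mem_univ t))
      simp only [CTask.occupied, Set.mem_union, Set.mem_Ico] at hyO hxO
      rcases hyO with ⟨h1, h2⟩ | ⟨h1, h2⟩
      · exact key _ _ hl1 h1 h2 fun hh => hxO (Or.inl hh)
      · exact key _ _ hl2 h1 h2 fun hh => hxO (Or.inr hh)
    have hsub : Set.Ico x m ⊆ Set.Ico 0 M := Set.Ico_subset_Ico hx0 hmM
    have hUd : Disjoint (⋃ t, (I.task t).occupied (σ t)) (Set.Ico x m) := by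
      rw [Set.disjoint_iUnion_left]
      exact fun t => (hdisjxm t).symm
    have hle : volume (⋃ t, (I.task t).occupied (σ t)) + volume (Set.Ico x m)
        ≤ volume (Set.Ico 0 M) := by
      rw [← measure_union hUd measurableSet_Ico]
      exact measure_mono (Set.union_subset (Set.iUnion_subset hOsub) hsub)
    rw [hvolU, Real.volume_Ico, Real.volume_Ico, sub_zero] at hle
    have h0 : ENNReal.ofReal (m - x) ≤ 0 := by
      have h' : ENNReal.ofReal M + ENNReal.ofReal (m - x) ≤ ENNReal.ofReal M + 0 := by
        simpa using hle
      exact (ENNReal.add_le_add_iff_left ENNReal.ofReal_ne_top).mp h'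
    have hmx := ENNReal.ofReal_eq_zero.mp (le_antisymm h0 zero_le)
    linarith
  -- distinct C-tasks start at distance ≥ 4
  have hCC : ∀ c ∈ C, ∀ c' ∈ C, c ≠ c' →
      σ (Sum.inl c) + 4 ≤ σ (Sum.inl c') ∨ σ (Sum.inl c') + 4 ≤ σ (Sum.inl c) := by
    intro c hc c' hc' hne
    by_contra h
    push_neg at h
    obtain ⟨h1, h2⟩ := h
    have hd := hdisj (Sum.inl c) (Sum.inl c') (by simpa using hne)
    have hocc : ∀ w : V, w ∈ C → ∀ y : ℝ, σ (Sum.inl w) ≤ y → y < σ (Sum.inl w) + 4 →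
        y ∈ (I.task (Sum.inl w)).occupied (σ (Sum.inl w)) := by
      intro w hw y hy1 hy2
      have htw : I.task (Sum.inl w) = stretched 4 := by simp [hIdef, triInst, hw]
      rw [htw, stretched_mem_occupied]
      left
      exact ⟨hy1, by linarith⟩
    rcases le_total (σ (Sum.inl c)) (σ (Sum.inl c')) with hle | hle
    · exact Set.disjoint_left.mp hd (hocc c hc _ hle h1) (hocc c' hc' _ le_rfl (by linarith))
    · exact Set.disjoint_left.mp hd (hocc c hc _ le_rfl (by linarith)) (hocc c' hc' _ hle h2)
  -- main extraction: each C-task carries a triangle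
  have hext : ∀ c ∈ C, ∃ u v : V,
      u ∉ C ∧ v ∉ C ∧ u ≠ v ∧ G.Adj u c ∧ G.Adj v c ∧ G.Adj v u ∧
      σ (Sum.inl u) = σ (Sum.inl c) + 4 ∧ σ (Sum.inl v) = σ (Sum.inl c) + 5 := by
    intro c hc
    have htc : I.task (Sum.inl c) = stretched 4 := by simp [hIdef, triInst, hc]
    have hs0 : 0 ≤ σ (Sum.inl c) := hpos _
    have hsM : σ (Sum.inl c) + 12 ≤ M := by
      have h := hmk (Sum.inl c)
      rw [SchedInstance.endTime, htc, stretched_dur] at h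
      linarith
    have hmemc : ∀ y : ℝ, σ (Sum.inl c) ≤ y → y < σ (Sum.inl c) + 4 →
        y ∈ (I.task (Sum.inl c)).occupied (σ (Sum.inl c)) := by
      intro y h1 h2
      rw [htc, stretched_mem_occupied]
      left
      exact ⟨h1, by linarith⟩
    have hwinc : ∀ y : ℝ, σ (Sum.inl c) + 4 ≤ y → y < σ (Sum.inl c) + 8 →
        y ∈ (I.task (Sum.inl c)).idleWindow (σ (Sum.inl c)) := by
      intro y h1 h2
      rw [htc, stretched_mem_idleWindow]
      exact ⟨by linarith, by linarith⟩
    -- the task occupying the instant σ(c) + 4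
    obtain ⟨t1, ht1⟩ := hcov (σ (Sum.inl c) + 4) (by linarith) (by linarith)
    have htne1 : Sum.inl c ≠ t1 := by
      intro h
      rw [← h, htc, stretched_mem_occupied] at ht1
      rcases ht1 with ⟨h1, h2⟩ | ⟨h1, h2⟩ <;> linarith
    have hcomp1 := hcomp (Sum.inl c) t1 htne1
      ⟨σ (Sum.inl c) + 4, ht1, hwinc _ le_rfl (by linarith)⟩
    obtain ⟨u, rfl, hadjuc', huC'⟩ : ∃ u : V, t1 = Sum.inl u ∧ G.Adj u c ∧ u ∉ C := by
      rw [hIdef] at hcomp1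
      rcases t1 with w | e
      · exact ⟨w, rfl, (hcomp1 : G.Adj w c ∧ w ∉ C).1, (hcomp1 : G.Adj w c ∧ w ∉ C).2⟩
      · rcases e with _ | _ | _
        · exact absurd hc (Finset.disjoint_left.mp hAC (hcomp1 : c ∈ A))
        · exact absurd hc (Finset.disjoint_left.mp hBC (hcomp1 : c ∈ B))
        · exact (hcomp1 : False).elim
    have htu : I.task (Sum.inl u) = stretched 1 := by simp [hIdef, triInst, huC']
    have hcu : c ≠ u := fun h => huC' (h ▸ hc)
    have hdcu := hdisj (Sum.inl c) (Sum.inl u) (by simpa using hcu)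
    have keyc : ∀ y : ℝ, y ∈ (I.task (Sum.inl u)).occupied (σ (Sum.inl u)) →
        σ (Sum.inl c) ≤ y → y < σ (Sum.inl c) + 4 → False := by
      intro y hy h1 h2
      exact Set.disjoint_left.mp hdcu (hmemc y h1 h2) hy
    have hmemu1 : ∀ y : ℝ, σ (Sum.inl u) ≤ y → y < σ (Sum.inl u) + 1 →
        y ∈ (I.task (Sum.inl u)).occupied (σ (Sum.inl u)) := by
      intro y h1 h2
      rw [htu, stretched_mem_occupied]
      left
      exact ⟨h1, by linarith⟩
    have hmemu2 : ∀ y : ℝ, σ (Sum.inl u) + 1 + 1 ≤ y → y < σ (Sum.inl u) + 1 + 1 + 1 →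
        y ∈ (I.task (Sum.inl u)).occupied (σ (Sum.inl u)) := by
      intro y h1 h2
      rw [htu, stretched_mem_occupied]
      right
      exact ⟨h1, by linarith⟩
    rw [htu, stretched_mem_occupied] at ht1
    have hru : σ (Sum.inl u) = σ (Sum.inl c) + 4 := by
      rcases ht1 with ⟨h1, h2⟩ | ⟨h1, h2⟩
      · by_contra hne'
        have hlt : σ (Sum.inl u) < σ (Sum.inl c) + 4 := lt_of_le_of_ne h1 hne'
        exact keyc _ (hmemu1 _ le_rfl (by linarith)) (by linarith) hlt
      · rcases eq_or_lt_of_le h1 with heq | hlt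
        · exact (keyc _ (hmemu1 _ le_rfl (by linarith)) (by linarith) (by linarith)).elim
        · exact (keyc _ (hmemu2 _ le_rfl (by linarith)) (by linarith) hlt).elim
    -- the task occupying the instant σ(c) + 5
    obtain ⟨t2, ht2⟩ := hcov (σ (Sum.inl c) + 5) (by linarith) (by linarith)
    have htne2 : Sum.inl c ≠ t2 := by
      intro h
      rw [← h, htc, stretched_mem_occupied] at ht2
      rcases ht2 with ⟨h1, h2⟩ | ⟨h1, h2⟩ <;> linarith
    have hcomp2 := hcomp (Sum.inl c) t2 htne2
      ⟨σ (Sum.inl c) + 5, ht2, hwinc _ (by linarith) (by linarith)⟩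
    obtain ⟨v, rfl, hadjvc', hvC'⟩ : ∃ v : V, t2 = Sum.inl v ∧ G.Adj v c ∧ v ∉ C := by
      rw [hIdef] at hcomp2
      rcases t2 with w | e
      · exact ⟨w, rfl, (hcomp2 : G.Adj w c ∧ w ∉ C).1, (hcomp2 : G.Adj w c ∧ w ∉ C).2⟩
      · rcases e with _ | _ | _
        · exact absurd hc (Finset.disjoint_left.mp hAC (hcomp2 : c ∈ A))
        · exact absurd hc (Finset.disjoint_left.mp hBC (hcomp2 : c ∈ B))
        · exact (hcomp2 : False).elim
    have hvu : v ≠ u := by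
      intro h
      subst h
      rw [htu, stretched_mem_occupied, hru] at ht2
      rcases ht2 with ⟨h1, h2⟩ | ⟨h1, h2⟩ <;> linarith
    have htv : I.task (Sum.inl v) = stretched 1 := by simp [hIdef, triInst, hvC']
    have hcv : c ≠ v := fun h => hvC' (h ▸ hc)
    have hdcv := hdisj (Sum.inl c) (Sum.inl v) (by simpa using hcv)
    have hduv := hdisj (Sum.inl u) (Sum.inl v) (by simpa using hvu.symm)
    have hmemv1 : ∀ y : ℝ, σ (Sum.inl v) ≤ y → y < σ (Sum.inl v) + 1 →
        y ∈ (I.task (Sum.inl v)).occupied (σ (Sum.inl v)) := by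
      intro y h1 h2
      rw [htv, stretched_mem_occupied]
      left
      exact ⟨h1, by linarith⟩
    have hmemv2 : ∀ y : ℝ, σ (Sum.inl v) + 1 + 1 ≤ y → y < σ (Sum.inl v) + 1 + 1 + 1 →
        y ∈ (I.task (Sum.inl v)).occupied (σ (Sum.inl v)) := by
      intro y h1 h2
      rw [htv, stretched_mem_occupied]
      right
      exact ⟨h1, by linarith⟩
    have hmemu' : ∀ y : ℝ, σ (Sum.inl c) + 4 ≤ y → y < σ (Sum.inl c) + 5 →
        y ∈ (I.task (Sum.inl u)).occupied (σ (Sum.inl u)) := by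
      intro y h1 h2
      rw [htu, stretched_mem_occupied]
      left
      exact ⟨by linarith, by linarith⟩
    have keyu : ∀ y : ℝ, y ∈ (I.task (Sum.inl v)).occupied (σ (Sum.inl v)) →
        σ (Sum.inl c) + 4 ≤ y → y < σ (Sum.inl c) + 5 → False := by
      intro y hy h1 h2
      exact Set.disjoint_left.mp hduv (hmemu' y h1 h2) hy
    have keyc2 : ∀ y : ℝ, y ∈ (I.task (Sum.inl v)).occupied (σ (Sum.inl v)) →
        σ (Sum.inl c) ≤ y → y < σ (Sum.inl c) + 4 → False := by
      intro y hy h1 h2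
      exact Set.disjoint_left.mp hdcv (hmemc y h1 h2) hy
    rw [htv, stretched_mem_occupied] at ht2
    have hrv : σ (Sum.inl v) = σ (Sum.inl c) + 5 := by
      rcases ht2 with ⟨h1, h2⟩ | ⟨h1, h2⟩
      · by_contra hne'
        have hlt : σ (Sum.inl v) < σ (Sum.inl c) + 5 := lt_of_le_of_ne h1 hne'
        exact keyu _ (hmemv1 _ le_rfl (by linarith)) (by linarith) hlt
      · rcases eq_or_lt_of_le h1 with heq | hlt
        · exact (keyc2 _ (hmemv1 _ le_rfl (by linarith)) (by linarith) (by linarith)).elim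
        · exact (keyu _ (hmemv2 _ le_rfl (by linarith)) (by linarith) hlt).elim
    have hwinu : σ (Sum.inl c) + 5 ∈ (I.task (Sum.inl u)).idleWindow (σ (Sum.inl u)) := by
      rw [htu, stretched_mem_idleWindow]
      constructor <;> linarith [hru]
    have hmemv' : σ (Sum.inl c) + 5 ∈ (I.task (Sum.inl v)).occupied (σ (Sum.inl v)) := by
      rw [htv, stretched_mem_occupied]
      left
      exact ⟨by linarith [hrv], by linarith [hrv]⟩
    have hcomp3 := hcomp (Sum.inl u) (Sum.inl v) (by simpa using hvu.symm)
      ⟨σ (Sum.inl c) + 5, hmemv', hwinu⟩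
    rw [hIdef] at hcomp3
    exact ⟨u, v, huC', hvC', hvu.symm, hadjuc', hadjvc',
      (hcomp3 : G.Adj v u ∧ v ∉ C).1, hru, hrv⟩
  choose! u v huC hvC huv hadjuc hadjvc hadjvu hσu hσv using hext
  have hdisj3 : ∀ c ∈ C, ∀ c' ∈ C, c ≠ c' →
      Disjoint ({c, u c, v c} : Finset V) {c', u c', v c'} := by
    intro c hc c' hc' hne
    have hgap := hCC c hc c' hc' hne
    have h1 := hσu c hc; have h2 := hσv c hc
    have h3 := hσu c' hc'; have h4 := hσv c' hc'
    rw [Finset.disjoint_left]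
    intro x hx hx'
    simp only [Finset.mem_insert, Finset.mem_singleton] at hx hx'
    rcases hx with rfl | rfl | rfl <;> rcases hx' with h | h | h
    · exact hne h
    · exact huC c' hc' (h ▸ hc)
    · exact hvC c' hc' (h ▸ hc)
    · rw [← h] at hc'; exact huC c hc hc'
    · rw [h] at h1; rcases hgap with hg | hg <;> linarith
    · rw [h] at h1; rcases hgap with hg | hg <;> linarith
    · rw [← h] at hc'; exact hvC c hc hc'
    · rw [h] at h2; rcases hgap with hg | hg <;> linarith
    · rw [h] at h2; rcases hgap with hg | hg <;> linarith
  have hcard3 : ∀ c ∈ C, ({c, u c, v c} : Finset V).card = 3 := by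
    intro c hc
    rw [Finset.card_insert_of_notMem, Finset.card_insert_of_notMem,
      Finset.card_singleton]
    · simp only [Finset.mem_singleton]; exact huv c hc
    · simp only [Finset.mem_insert, Finset.mem_singleton]
      push_neg
      exact ⟨fun h => huC c hc (h ▸ hc), fun h => hvC c hc (h ▸ hc)⟩
  have hinj : Set.InjOn (fun c => ({c, u c, v c} : Finset V)) ↑C := by
    intro c hc c' hc' h
    by_contra hne
    replace h : ({c, u c, v c} : Finset V) = {c', u c', v c'} := h
    have hcmem : c ∈ ({c', u c', v c'} : Finset V) := by
      rw [← h]; simp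
    simp only [Finset.mem_insert, Finset.mem_singleton] at hcmem
    rcases hcmem with h' | h' | h'
    exacts [hne h', huC c' (Finset.mem_coe.mp hc') (h' ▸ Finset.mem_coe.mp hc),
      hvC c' (Finset.mem_coe.mp hc') (h' ▸ Finset.mem_coe.mp hc)]
  have hcPart : (C.image fun c => ({c, u c, v c} : Finset V)).card = q := by
    rw [Finset.card_image_of_injOn hinj, hcC]
  have hcV : Fintype.card V = 3 * q := by
    rw [← Finset.card_univ, ← hcover, Finset.card_union_of_disjoint
      (Finset.disjoint_union_left.mpr ⟨hAC, hBC⟩), Finset.card_union_of_disjoint hAB,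
      hcA, hcB, hcC]
    ring
  refine ⟨C.image fun c => ({c, u c, v c} : Finset V), hcPart, ?_, ?_, ?_⟩
  · intro S hS S' hS' hSS'
    obtain ⟨c, hc, rfl⟩ := Finset.mem_image.mp hS
    obtain ⟨c', hc', rfl⟩ := Finset.mem_image.mp hS'
    exact hdisj3 c hc c' hc' fun h => hSS' (by rw [h])
  · apply Finset.eq_univ_of_card
    rw [Finset.card_biUnion]
    · have hsum3 : ∀ S ∈ C.image fun c => ({c, u c, v c} : Finset V), (id S).card = 3 := by
        intro S hS
        obtain ⟨c, hc, rfl⟩ := Finset.mem_image.mp hS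
        exact hcard3 c hc
      rw [Finset.sum_congr rfl hsum3, Finset.sum_const, hcPart, hcV, smul_eq_mul]
      ring
    · intro S hS S' hS' hSS'
      obtain ⟨c, hc, rfl⟩ := Finset.mem_image.mp hS
      obtain ⟨c', hc', rfl⟩ := Finset.mem_image.mp hS'
      exact hdisj3 c hc c' hc' fun h => hSS' (by rw [h])
  · intro S hS
    obtain ⟨c, hc, rfl⟩ := Finset.mem_image.mp hS
    refine ⟨hcard3 c hc, ?_⟩
    intro x hx y hy hxy
    have h1 := hadjuc c hc; have h2 := hadjvc c hc; have h3 := hadjvu c hc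
    simp only [Finset.mem_insert, Finset.mem_singleton] at hx hy
    rcases hx with rfl | rfl | rfl <;> rcases hy with rfl | rfl | rfl <;>
      first
        | exact absurd rfl hxy
        | exact h1.symm
        | exact h1
        | exact h2.symm
        | exact h2
        | exact h3.symm
        | exact h3
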